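/- Fix a real number p with 0 < p < 1 and set b = 1/(1 − p). For each integer n ≥ 2 let c(n) = ⌊log_b n − log_b((log_b n)·(ln n))⌋ + 2. Then the sequence E_n = C(n, c(n)) · (1 − (1 − p)^{c(n)})^{n − c(n)} · c(n)! / c(n)^{c(n)} tends to infinity as n → ∞. (E_n is the expected number of rainbow dominating sets of size c(n) in the random graph G(n, p) whose vertices are coloured with c(n) colours uniformly and independently at random.) -/

import Mathlib

open Filter

private lemma ev_log_le (ε : ℝ) (hε : 0 < ε) :
    ∀ᶠ t : ℝ in atTop, Real.log t ≤ ε * t := by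
  have h := Real.isLittleO_log_id_atTop.def hε
  filter_upwards [h, eventually_ge_atTop (0:ℝ)] with t h1 h2
  simp only [Real.norm_eq_abs, id_eq, abs_of_nonneg h2] at h1
  exact (le_abs_self _).trans h1

private lemma ev_pow6 : ∀ᶠ t : ℝ in atTop, t ^ 6 ≤ Real.exp t := by
  have h := (Real.tendsto_exp_div_pow_atTop 6).eventually_ge_atTop 1
  filter_upwards [h, eventually_gt_atTop (0:ℝ)] with t h1 h2
  have h3 : (0:ℝ) < t ^ 6 := by positivity
  rw [le_div_iff₀ h3] at h1
  linarith

set_option maxHeartbeats 2000000 in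
/-- fix `0 < p < 1`, set `b = 1/(1-p)` and, for each `n`,
`c(n) = ⌊log_b n - log_b((log_b n)·(ln n))⌋ + 2`.  Then the expected number
`E_n = C(n, c(n)) · (1 - (1-p)^{c(n)})^{n - c(n)} · c(n)! / c(n)^{c(n)}`
of rainbow dominating sets of size `c(n)` in a randomly coloured `G(n,p)`
tends to infinity as `n → ∞`. -/
theorem expected_rainbow_dominating_tendsto_atTop
    (p : ℝ) (hp0 : 0 < p) (hp1 : p < 1)
    (b : ℝ) (hb : b = 1 / (1 - p))
    (c : ℕ → ℕ)
    (hc : ∀ n : ℕ,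
      c n = (⌊Real.logb b n - Real.logb b (Real.logb b n * Real.log n)⌋ + 2).toNat) :
    Tendsto
      (fun n : ℕ =>
        (n.choose (c n) : ℝ) * (1 - (1 - p) ^ (c n)) ^ (n - c n) *
          ((c n).factorial : ℝ) / ((c n : ℝ) ^ (c n)))
      atTop atTop := by
  have h1p : 0 < 1 - p := by linarith
  have hb1 : 1 < b := by
    rw [hb, lt_div_iff₀ h1p]; linarith
  have hb0 : 0 < b := lt_trans one_pos hb1
  have hbne : b ≠ 1 := ne_of_gt hb1
  have hbinv : b⁻¹ = 1 - p := by rw [hb, one_div, inv_inv]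
  set lb := Real.log b with hlbdef
  have hlb : 0 < lb := Real.log_pos hb1
  set K : ℝ := |Real.log lb| + 1 with hKdef
  have hK1 : (1:ℝ) ≤ K := by
    rw [hKdef]; linarith [abs_nonneg (Real.log lb)]
  -- eventual facts about t = log n
  have evH1 : ∀ᶠ t : ℝ in atTop, lb + (2 * Real.log t - Real.log lb) ≤ t := by
    filter_upwards [ev_log_le (1/4) (by norm_num),
      eventually_ge_atTop (4 * (lb + |Real.log lb| + 1))] with t h1 h2
    have hla : -|Real.log lb| ≤ Real.log lb := neg_abs_le _
    nlinarith [abs_nonneg (Real.log lb)]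
  have evH3 : ∀ᶠ t : ℝ in atTop, lb ≤ t * t := by
    filter_upwards [eventually_ge_atTop (max 1 lb)] with t ht
    have h1 : (1:ℝ) ≤ t := le_of_max_le_left ht
    have h2 : lb ≤ t := le_of_max_le_right ht
    nlinarith
  have evH4 : ∀ᶠ t : ℝ in atTop, 2 * (1 - p) * (t * t) ≤ lb * Real.exp t := by
    filter_upwards [ev_pow6, eventually_ge_atTop (max 1 (2 * (1 - p) / lb))] with t h6 ht
    have h1 : (1:ℝ) ≤ t := le_of_max_le_left ht
    have h2 : 2 * (1 - p) / lb ≤ t := le_of_max_le_right ht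
    have h3 : 2 * (1 - p) ≤ lb * t := by
      rw [div_le_iff₀ hlb] at h2; linarith
    have h4 : t ^ 3 ≤ t ^ 6 := pow_le_pow_right₀ h1 (by norm_num)
    have h5 : lb * t ^ 6 ≤ lb * Real.exp t := by nlinarith
    nlinarith
  have evH5 : ∀ᶠ t : ℝ in atTop, 2 * ((1 - p) * (t * t)) ^ 2 ≤ lb ^ 2 * Real.exp t := by
    filter_upwards [ev_pow6, eventually_ge_atTop (max 1 (2 * (1 - p) ^ 2 / lb ^ 2))] with t h6 ht
    have h1 : (1:ℝ) ≤ t := le_of_max_le_left ht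
    have h2 : 2 * (1 - p) ^ 2 / lb ^ 2 ≤ t := le_of_max_le_right ht
    have h3 : 2 * (1 - p) ^ 2 ≤ lb ^ 2 * t := by
      rw [div_le_iff₀ (by positivity)] at h2; linarith
    have h4 : t ^ 5 ≤ t ^ 6 := pow_le_pow_right₀ h1 (by norm_num)
    have h5 : lb ^ 2 * t ^ 6 ≤ lb ^ 2 * Real.exp t := by nlinarith
    have ht4 : (0:ℝ) ≤ t ^ 4 := by positivity
    calc 2 * ((1 - p) * (t * t)) ^ 2 = (2 * (1 - p) ^ 2) * t ^ 4 := by ring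
      _ ≤ (lb ^ 2 * t) * t ^ 4 := mul_le_mul_of_nonneg_right h3 ht4
      _ = lb ^ 2 * t ^ 5 := by ring
      _ ≤ lb ^ 2 * t ^ 6 := mul_le_mul_of_nonneg_left h4 (by positivity)
      _ ≤ lb ^ 2 * Real.exp t := h5
  have evH6 : ∀ᶠ t : ℝ in atTop, 2 * t + 4 * lb ≤ lb * Real.exp t := by
    filter_upwards [ev_pow6, eventually_ge_atTop (max 1 ((2 + 4 * lb) / lb))] with t h6 ht
    have h1 : (1:ℝ) ≤ t := le_of_max_le_left ht
    have h2 : (2 + 4 * lb) / lb ≤ t := le_of_max_le_right ht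
    have h3 : 2 + 4 * lb ≤ lb * t := by rw [div_le_iff₀ hlb] at h2; linarith
    have h4 : t ^ 2 ≤ t ^ 6 := pow_le_pow_right₀ h1 (by norm_num)
    have h5 : lb * t ^ 6 ≤ lb * Real.exp t := by nlinarith
    nlinarith
  -- bound on log (t/lb + 2)
  have evY : ∀ᶠ t : ℝ in atTop, Real.log (t / lb + 2) ≤ 2 * Real.log t := by
    filter_upwards [eventually_ge_atTop (max 1 (1 / lb + 2))] with t ht
    have h1 : (1:ℝ) ≤ t := le_of_max_le_left ht
    have h2 : 1 / lb + 2 ≤ t := le_of_max_le_right ht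
    have harg : t / lb + 2 ≤ t * t := by
      have : t / lb ≤ t * (1 / lb) := by rw [div_eq_mul_one_div]
      nlinarith [div_nonneg (by linarith : (0:ℝ) ≤ t) hlb.le]
    have hpos : (0:ℝ) < t / lb + 2 := by positivity
    calc Real.log (t / lb + 2) ≤ Real.log (t * t) := Real.log_le_log hpos harg
      _ = Real.log t + Real.log t := Real.log_mul (by linarith) (by linarith)
      _ = 2 * Real.log t := by ring
  have evH7 : ∀ᶠ t : ℝ in atTop, Real.log (t / lb + 2) ≤ t - Real.log 2 := by
    filter_upwards [evY, ev_log_le (1/4) (by norm_num), eventually_ge_atTop 4] with t h1 h2 h3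
    have hl2 : Real.log 2 ≤ 1 := by
      have := Real.log_le_sub_one_of_pos (by norm_num : (0:ℝ) < 2); linarith
    linarith
  have evH8 : ∀ᶠ t : ℝ in atTop,
      (1 - p / 2) * (t * t) + lb ≤
        (t - (2 * Real.log t - Real.log lb)) *
          (t - Real.log 2 - Real.log (t / lb + 2)) := by
    filter_upwards [evY, ev_log_le (p/100) (by positivity),
      eventually_ge_atTop (max 1 ((100 / p) * (K + lb + 1)))] with t hY hg ht
    have h1 : (1:ℝ) ≤ t := le_of_max_le_left ht
    have h2 : (100 / p) * (K + lb + 1) ≤ t := le_of_max_le_right ht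
    have hpt : 100 * (K + lb + 1) ≤ p * t := by
      rw [div_mul_eq_mul_div, div_le_iff₀ hp0] at h2; nlinarith
    have hgpos : 0 ≤ Real.log t := Real.log_nonneg h1
    have hla : -|Real.log lb| ≤ Real.log lb := neg_abs_le _
    have hla' : Real.log lb ≤ |Real.log lb| := le_abs_self _
    have hl2 : Real.log 2 ≤ 1 := by
      have := Real.log_le_sub_one_of_pos (by norm_num : (0:ℝ) < 2); linarith
    have hl2' : 0 ≤ Real.log 2 := Real.log_nonneg (by norm_num)
    have hYpos : 0 ≤ Real.log (t / lb + 2) := by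
      apply Real.log_nonneg; nlinarith [div_nonneg (by linarith : (0:ℝ) ≤ t) hlb.le]
    -- factor bounds
    have hA : (1 - p/50) * t - K ≤ t - (2 * Real.log t - Real.log lb) := by nlinarith
    have hB : (1 - p/50) * t - K ≤ t - Real.log 2 - Real.log (t / lb + 2) := by nlinarith
    have ha0 : 0 ≤ (1 - p/50) * t - K := by nlinarith
    have hprod : ((1 - p/50) * t - K) * ((1 - p/50) * t - K) ≤
        (t - (2 * Real.log t - Real.log lb)) *
          (t - Real.log 2 - Real.log (t / lb + 2)) :=
      mul_le_mul hA hB ha0 (le_trans ha0 hA)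
    nlinarith [hprod, sq_nonneg (p * t)]
  -- pull back along t = log n
  have hlogn : Tendsto (fun n : ℕ => Real.log n) atTop atTop :=
    Real.tendsto_log_atTop.comp tendsto_natCast_atTop_atTop
  have key : ∀ᶠ n : ℕ in atTop,
      Real.exp ((p / 2) * (Real.log n * Real.log n / lb)) ≤
        (n.choose (c n) : ℝ) * (1 - (1 - p) ^ (c n)) ^ (n - c n) *
          ((c n).factorial : ℝ) / ((c n : ℝ) ^ (c n)) := by
    filter_upwards [eventually_ge_atTop 2,
      hlogn.eventually evH1, hlogn.eventually evH3, hlogn.eventually evH4,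
      hlogn.eventually evH5, hlogn.eventually evH6, hlogn.eventually evH7,
      hlogn.eventually evH8, hlogn.eventually (eventually_ge_atTop (1:ℝ))]
      with n hn2 hH1 hH3 hH4 hH5 hH6 hH7 hH8 ht1
    set t := Real.log n with htdef
    have hn0 : (0:ℝ) < n := by exact_mod_cast Nat.lt_of_lt_of_le Nat.zero_lt_two hn2
    have hent : Real.exp t = n := Real.exp_log hn0
    have ht0 : (0:ℝ) < t := lt_of_lt_of_le one_pos ht1
    -- logb computations
    have hLdef : Real.logb b n = t / lb := by rw [← Real.log_div_log]
    have hApos : 0 < Real.logb b n * Real.log n := by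
      rw [hLdef]; positivity
    have hDdef : Real.logb b (Real.logb b n * Real.log n) =
        (2 * Real.log t - Real.log lb) / lb := by
      rw [← Real.log_div_log, hLdef]
      congr 1
      rw [div_mul_eq_mul_div, Real.log_div (by positivity) hlb.ne',
        Real.log_mul ht0.ne' ht0.ne']
      ring
    set m : ℝ := Real.logb b n - Real.logb b (Real.logb b n * Real.log n) with hmdef
    have hm_eq : m = (t - (2 * Real.log t - Real.log lb)) / lb := by
      rw [hmdef, hDdef, hLdef, div_sub_div_same]
    have hm1 : 1 ≤ m := by
      rw [hm_eq, le_div_iff₀ hlb]; linarith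
    have hmD : m ≤ t / lb := by
      have hnn : 0 ≤ Real.logb b (Real.logb b n * Real.log n) := by
        apply Real.logb_nonneg hb1
        rw [hLdef, div_mul_eq_mul_div, le_div_iff₀ hlb]; linarith
      rw [hmdef]; linarith [hnn, hLdef]
    -- c bounds
    have hcn := hc n
    rw [← hmdef] at hcn
    have hfl : (1:ℤ) ≤ ⌊m⌋ := Int.le_floor.mpr (by exact_mod_cast hm1)
    have hcz : ((c n : ℕ) : ℤ) = ⌊m⌋ + 2 := by
      rw [hcn]; exact Int.toNat_of_nonneg (by omega)
    have hcR : (c n : ℝ) = (⌊m⌋ : ℝ) + 2 := by exact_mod_cast hcz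
    have hc_ge : m + 1 ≤ (c n : ℝ) := by
      have := Int.sub_one_lt_floor m
      rw [hcR]; linarith
    have hc_le : (c n : ℝ) ≤ m + 2 := by
      have := Int.floor_le m
      rw [hcR]; linarith
    have hc_pos : (0:ℝ) < (c n : ℝ) := by linarith
    have hc_posn : 0 < c n := by exact_mod_cast hc_pos
    have hc_leL2 : (c n : ℝ) ≤ t / lb + 2 := by linarith
    have hc_half : (c n : ℝ) ≤ (n:ℝ) / 2 := by
      have h6 : t / lb + 2 ≤ Real.exp t / 2 := by
        rw [le_div_iff₀ (by norm_num : (0:ℝ) < 2)]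
        have hid : (t / lb + 2) * 2 = (2 * t + 4 * lb) / lb := by field_simp; ring
        rw [hid, div_le_iff₀ hlb]
        linarith [hH6, mul_comm (Real.exp t) lb]
      rw [hent] at h6
      linarith
    have hc_len : c n ≤ n := by
      have : (c n : ℝ) ≤ (n:ℝ) := by linarith
      exact_mod_cast this
    -- q bounds
    set q : ℝ := (1 - p) ^ (c n) with hqdef
    have hq_pos : 0 < q := pow_pos h1p _
    have hq_le : q ≤ (1 - p) * (t * t / lb) / n := by
      have hmono : (1 - p) ^ ((c n : ℕ) : ℝ) ≤ (1 - p) ^ (m + 1 : ℝ) :=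
        Real.rpow_le_rpow_of_exponent_ge h1p (by linarith) hc_ge
      rw [Real.rpow_natCast] at hmono
      have hsplit : (1 - p) ^ (m + 1 : ℝ) = (1 - p) * (1 - p) ^ (m : ℝ) := by
        rw [Real.rpow_add h1p, Real.rpow_one, mul_comm]
      have hval : (1 - p) ^ (m : ℝ) = t * t / lb / n := by
        rw [← hbinv, Real.inv_rpow hb0.le, ← Real.rpow_neg hb0.le, hmdef, neg_sub,
          Real.rpow_sub hb0, Real.rpow_logb hb0 hbne hApos, Real.rpow_logb hb0 hbne hn0,
          hLdef]
        congr 1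
        ring
      calc q ≤ (1 - p) ^ (m + 1 : ℝ) := hmono
        _ = (1 - p) * (t * t / lb / n) := by rw [hsplit, hval]
        _ = (1 - p) * (t * t / lb) / n := by ring
    have hq_half : q ≤ 1 / 2 := by
      refine hq_le.trans ?_
      rw [div_le_div_iff₀ hn0 (by norm_num : (0:ℝ) < 2), ← hent]
      have : (1 - p) * (t * t / lb) * 2 = 2 * (1 - p) * (t * t) / lb := by ring
      rw [this, div_le_iff₀ hlb]
      linarith [hH4, mul_comm (Real.exp t) lb]
    have hnq : (n:ℝ) * q ≤ (1 - p) * (t * t / lb) := by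
      have := (le_div_iff₀ hn0).mp hq_le
      linarith
    have hq2 : 2 * (n:ℝ) * q ^ 2 ≤ 1 := by
      have hXnn : 0 ≤ (1 - p) * (t * t / lb) := by positivity
      have hsq : ((n:ℝ) * q) ^ 2 ≤ ((1 - p) * (t * t / lb)) ^ 2 := by
        apply pow_le_pow_left₀ (by positivity) hnq
      have h5' : 2 * ((1 - p) * (t * t / lb)) ^ 2 ≤ (n:ℝ) := by
        rw [← hent]
        have hid : 2 * ((1 - p) * (t * t / lb)) ^ 2 = 2 * ((1 - p) * (t * t)) ^ 2 / lb ^ 2 := by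
          field_simp
        rw [hid, div_le_iff₀ (by positivity : (0:ℝ) < lb ^ 2)]
        linarith [hH5, mul_comm (Real.exp t) (lb ^ 2)]
      rw [← mul_le_mul_iff_of_pos_right hn0]
      calc 2 * (n:ℝ) * q ^ 2 * (n:ℝ) = 2 * ((n:ℝ) * q) ^ 2 := by ring
        _ ≤ (n:ℝ) := by linarith [hsq, h5']
        _ = 1 * (n:ℝ) := by ring
    -- lower bound for (1-q)^(n - c n)
    have h1q : 0 < 1 - q := by linarith
    have hB : Real.exp (-((1 - p) * (t * t / lb) + 1)) ≤ (1 - q) ^ (n - c n) := by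
      have hexp1 : Real.exp (-(q / (1 - q))) ≤ 1 - q := by
        have h := Real.add_one_le_exp (q / (1 - q))
        have h2 : q / (1 - q) + 1 = 1 / (1 - q) := by field_simp; ring
        rw [h2] at h
        rw [Real.exp_neg]
        have hpos : 0 < 1 / (1 - q) := by positivity
        calc (Real.exp (q / (1 - q)))⁻¹ ≤ (1 / (1 - q))⁻¹ :=
              inv_anti₀ hpos h
          _ = 1 - q := by rw [one_div, inv_inv]
      have hexp2 : Real.exp (-(q / (1 - q))) ^ (n - c n) ≤ (1 - q) ^ (n - c n) :=
        pow_le_pow_left₀ (Real.exp_pos _).le hexp1 _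
      have hexp3 : Real.exp (-(q / (1 - q))) ^ (n - c n) =
          Real.exp (-(((n - c n : ℕ) : ℝ) * (q / (1 - q)))) := by
        rw [← Real.exp_nat_mul]; congr 1; ring
      have hcast : ((n - c n : ℕ) : ℝ) = (n:ℝ) - (c n : ℝ) := by
        rw [Nat.cast_sub hc_len]
      have hfrac : q / (1 - q) ≤ q + 2 * q ^ 2 := by
        rw [div_le_iff₀ h1q]
        have hkey : 0 ≤ q ^ 2 * (1 - 2 * q) := mul_nonneg (sq_nonneg q) (by linarith)
        linarith [hkey]
      have hfrac0 : 0 ≤ q / (1 - q) := div_nonneg hq_pos.le h1q.le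
      have hxle : ((n - c n : ℕ) : ℝ) * (q / (1 - q)) ≤ (1 - p) * (t * t / lb) + 1 := by
        have hle1 : ((n - c n : ℕ) : ℝ) ≤ (n:ℝ) := by rw [hcast]; linarith
        have hle2 : ((n - c n : ℕ) : ℝ) * (q / (1 - q)) ≤ (n:ℝ) * (q + 2 * q ^ 2) := by
          apply mul_le_mul hle1 hfrac hfrac0 hn0.le
        have hrw : (n:ℝ) * (q + 2 * q ^ 2) = (n:ℝ) * q + 2 * (n:ℝ) * q ^ 2 := by ring
        linarith [hle2, hnq, hq2, hrw]
      calc Real.exp (-((1 - p) * (t * t / lb) + 1)) ≤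
            Real.exp (-(((n - c n : ℕ) : ℝ) * (q / (1 - q)))) := by
              apply Real.exp_le_exp.mpr; linarith
        _ = Real.exp (-(q / (1 - q))) ^ (n - c n) := hexp3.symm
        _ ≤ (1 - q) ^ (n - c n) := hexp2
    -- lower bound for choose * factorial
    have hAC : ((n:ℝ) / 2) ^ (c n) ≤ (n.choose (c n) : ℝ) * ((c n).factorial : ℝ) := by
      have h1 : (n + 1 - c n) ^ (c n) ≤ n.descFactorial (c n) :=
        Nat.pow_sub_le_descFactorial n (c n)
      have h2 : n.descFactorial (c n) = (c n).factorial * n.choose (c n) :=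
        Nat.descFactorial_eq_factorial_mul_choose n (c n)
      have h3 : ((n + 1 - c n : ℕ) : ℝ) ^ (c n) ≤
          (n.choose (c n) : ℝ) * ((c n).factorial : ℝ) := by
        rw [h2] at h1
        exact_mod_cast (by linarith [h1] : (n + 1 - c n) ^ (c n) ≤ n.choose (c n) * (c n).factorial)
      refine le_trans (pow_le_pow_left₀ (by positivity) ?_ _) h3
      rw [Nat.cast_sub (by omega : c n ≤ n + 1)]
      push_cast
      linarith
    -- assemble
    have hcpow : (0:ℝ) < (c n : ℝ) ^ (c n) := by positivity
    have hnc2 : (0:ℝ) < (n:ℝ) / 2 / (c n : ℝ) := by positivity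
    have hpow : ((n:ℝ) / 2 / (c n : ℝ)) ^ (c n) =
        Real.exp ((c n : ℝ) * Real.log ((n:ℝ) / 2 / (c n : ℝ))) := by
      rw [← Real.exp_log (pow_pos hnc2 _), Real.log_pow]
    have hlogarg : t - Real.log 2 - Real.log (t / lb + 2) ≤
        Real.log ((n:ℝ) / 2 / (c n : ℝ)) := by
      rw [Real.log_div (by positivity) hc_pos.ne', Real.log_div hn0.ne' (by norm_num)]
      have hlogc : Real.log (c n : ℝ) ≤ Real.log (t / lb + 2) :=
        Real.log_le_log hc_pos hc_leL2
      linarith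
    have hR0 : 0 ≤ t - Real.log 2 - Real.log (t / lb + 2) := by linarith [hH7]
    have hexc : m * (t - Real.log 2 - Real.log (t / lb + 2)) ≤
        (c n : ℝ) * Real.log ((n:ℝ) / 2 / (c n : ℝ)) := by
      apply mul_le_mul (by linarith) hlogarg hR0 (by linarith)
    have hmR : (1 - p / 2) * (t * t / lb) + 1 ≤
        m * (t - Real.log 2 - Real.log (t / lb + 2)) := by
      rw [hm_eq, div_mul_eq_mul_div, le_div_iff₀ hlb]
      have : ((1 - p / 2) * (t * t / lb) + 1) * lb = (1 - p / 2) * (t * t) + lb := by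
        field_simp
      rw [this]
      exact hH8
    have hfinal : (p / 2) * (t * t / lb) ≤
        (c n : ℝ) * Real.log ((n:ℝ) / 2 / (c n : ℝ)) - ((1 - p) * (t * t / lb) + 1) := by
      have expand : (1 - p / 2) * (t * t / lb) + 1 =
          ((1 - p) * (t * t / lb) + 1) + (p / 2) * (t * t / lb) := by ring
      linarith [hexc, hmR]
    calc Real.exp ((p / 2) * (t * t / lb)) ≤
          Real.exp ((c n : ℝ) * Real.log ((n:ℝ) / 2 / (c n : ℝ)) -
            ((1 - p) * (t * t / lb) + 1)) := Real.exp_le_exp.mpr (by linarith)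
      _ = Real.exp ((c n : ℝ) * Real.log ((n:ℝ) / 2 / (c n : ℝ))) *
            Real.exp (-((1 - p) * (t * t / lb) + 1)) := by
          rw [← Real.exp_add, sub_eq_add_neg]
      _ ≤ ((n.choose (c n) : ℝ) * ((c n).factorial : ℝ) / ((c n : ℝ) ^ (c n))) *
            (1 - q) ^ (n - c n) := by
          apply mul_le_mul ?_ hB (Real.exp_pos _).le (by positivity)
          rw [← hpow, div_pow]
          exact (div_le_div_iff_of_pos_right hcpow).mpr hAC
      _ = (n.choose (c n) : ℝ) * (1 - q) ^ (n - c n) *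
            ((c n).factorial : ℝ) / ((c n : ℝ) ^ (c n)) := by ring
  refine tendsto_atTop_mono' atTop key ?_
  apply Real.tendsto_exp_atTop.comp
  have hsq : Tendsto (fun x : ℝ => (p / 2) * (x * x / lb)) atTop atTop := by
    apply Tendsto.const_mul_atTop (by positivity)
    exact (tendsto_id.atTop_mul_atTop₀ tendsto_id).atTop_div_const hlb
  exact hsq.comp hlogn
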